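/- arXiv:1111.1558 — 7 statements merged into one kernel-verified Lean document; each statement's English description precedes it below -/
import Mathlib

section
/- Let H be a hypergraph on a finite vertex set V such that every vertex has degree at most Δ and every hyperedge contains at least δ vertices, where δ ≥ 2. Let k = ⌈2Δ/δ⌉ (the least natural number k with k·δ ≥ 2Δ). Then H admits a proper vertex coloring in k + 1 colors. -/
/-- A proper coloring of a hypergraph with hyperedge family `ℰ` in `m` colors:
every hyperedge contains two vertices of different colors. -/
def HypergraphProperColoring {V : Type*} (ℰ : Finset (Finset V)) (m : ℕ)
    (c : V → Fin m) : Prop :=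
  ∀ e ∈ ℰ, ∃ u ∈ e, ∃ w ∈ e, c u ≠ c w

/-- The degree of a vertex `v` in a hypergraph: the number of hyperedges containing `v`. -/
def hypDegree {V : Type*} [DecidableEq V] (ℰ : Finset (Finset V)) (v : V) : ℕ :=
  (ℰ.filter (fun e => v ∈ e)).card

theorem hypergraph_proper_coloring_succ_ceil
    {V : Type*} [Fintype V] [DecidableEq V]
    (ℰ : Finset (Finset V)) (Δ δ k : ℕ)
    (hδ : 2 ≤ δ)
    (hdeg : ∀ v : V, hypDegree ℰ v ≤ Δ)
    (hedge : ∀ e ∈ ℰ, δ ≤ e.card)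
    (hk₁ : 2 * Δ ≤ k * δ)
    (hk₂ : ∀ m : ℕ, 2 * Δ ≤ m * δ → k ≤ m) :
    ∃ c : V → Fin (k + 1), HypergraphProperColoring ℰ (k + 1) c := by
  classical
  rcases Finset.eq_empty_or_nonempty ℰ with hE | hE
  · exact ⟨fun _ => ⟨0, Nat.succ_pos k⟩, fun e he => absurd he (by simp [hE])⟩
  obtain ⟨e₀, he₀⟩ := hE
  have he₀ne : e₀.Nonempty := Finset.card_pos.mp (lt_of_lt_of_le (by omega) (hedge e₀ he₀))
  obtain ⟨v₀, hv₀⟩ := he₀ne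
  have hΔ1 : 1 ≤ Δ := le_trans
    (Finset.card_pos.mpr ⟨e₀, Finset.mem_filter.mpr ⟨he₀, hv₀⟩⟩) (hdeg v₀)
  have hk1 : 1 ≤ k := by
    rcases Nat.eq_zero_or_pos k with h | h
    · rw [h, Nat.zero_mul] at hk₁; omega
    · exact h
  have hkΔ : k ≤ Δ := hk₂ Δ (by nlinarith)
  have hkey : Δ ≤ k * (δ - 1) := by
    have h1 : k * (δ - 1) + k = k * δ := by
      have : δ - 1 + 1 = δ := by omega
      calc k * (δ - 1) + k = k * (δ - 1 + 1) := by ring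
        _ = k * δ := by rw [this]
    omega
  set n := Fintype.card V with hn
  set φ : V ≃ Fin n := Fintype.equivFin V with hφ
  -- the minimum-rank element of a finset
  set amin : Finset V → V := fun s =>
    if h : (s.image φ).Nonempty then φ.symm ((s.image φ).min' h) else v₀ with hamin
  have hamin_mem : ∀ s : Finset V, s.Nonempty → amin s ∈ s := by
    intro s hs
    have h : (s.image φ).Nonempty := hs.image φ
    rw [hamin]; simp only [dif_pos h]
    obtain ⟨y, hy, hy2⟩ := Finset.mem_image.mp ((s.image φ).min'_mem h)
    rw [← hy2, Equiv.symm_apply_apply]; exact hy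
  have hamin_le : ∀ (s : Finset V) (x : V), x ∈ s → (φ (amin s) : ℕ) ≤ (φ x : ℕ) := by
    intro s x hx
    have h : (s.image φ).Nonempty := ⟨φ x, Finset.mem_image_of_mem φ hx⟩
    rw [hamin]; simp only [dif_pos h, Equiv.apply_symm_apply]
    exact (s.image φ).min'_le (φ x) (Finset.mem_image_of_mem φ hx)
  set A : {e // e ∈ ℰ} → Finset V := fun e => e.1.erase (amin e.1) with hA
  set T : {e // e ∈ ℰ} → Finset (V × Fin k) := fun e => (A e) ×ˢ Finset.univ with hT
  have hAe : ∀ e : {e // e ∈ ℰ}, δ - 1 ≤ (A e).card ∧ A e ⊆ e.1 := by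
    intro e
    have hne : e.1.Nonempty := Finset.card_pos.mp (lt_of_lt_of_le (by omega) (hedge e.1 e.2))
    constructor
    · rw [hA]; simp only
      rw [Finset.card_erase_of_mem (hamin_mem e.1 hne)]
      have := hedge e.1 e.2; omega
    · exact Finset.erase_subset _ _
  -- Hall condition
  have hall : ∀ s : Finset {e // e ∈ ℰ}, s.card ≤ (s.biUnion T).card := by
    intro s
    set U : Finset V := s.biUnion A with hU
    have hbu : s.biUnion T = U ×ˢ (Finset.univ : Finset (Fin k)) := by
      ext ⟨v, j⟩
      simp only [Finset.mem_biUnion, hT, Finset.mem_product, Finset.mem_univ, and_true, hU]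
    have hcard : (s.biUnion T).card = U.card * k := by
      rw [hbu, Finset.card_product, Finset.card_univ, Fintype.card_fin]
    rw [hcard]
    -- double counting
    have hsub : ∀ e ∈ s, A e ⊆ U := fun e he => Finset.subset_biUnion_of_mem A he
    have h1 : (δ - 1) * s.card ≤ ∑ e ∈ s, (A e).card := by
      calc (δ - 1) * s.card = ∑ _e ∈ s, (δ - 1) := by
            rw [Finset.sum_const, smul_eq_mul, mul_comm]
        _ ≤ ∑ e ∈ s, (A e).card := Finset.sum_le_sum fun e _ => (hAe e).1
    have h2 : ∑ e ∈ s, (A e).card ≤ Δ * U.card := by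
      have heq : ∀ e ∈ s, (A e).card = ∑ v ∈ U, (if v ∈ A e then 1 else 0) := by
        intro e he
        rw [← Finset.card_filter, Finset.filter_mem_eq_inter,
          Finset.inter_eq_right.mpr (hsub e he)]
      calc ∑ e ∈ s, (A e).card = ∑ e ∈ s, ∑ v ∈ U, (if v ∈ A e then 1 else 0) :=
            Finset.sum_congr rfl heq
        _ = ∑ v ∈ U, ∑ e ∈ s, (if v ∈ A e then 1 else 0) := Finset.sum_comm
        _ = ∑ v ∈ U, (s.filter (fun e => v ∈ A e)).card := by
            refine Finset.sum_congr rfl fun v _ => ?_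
            rw [Finset.card_filter]
        _ ≤ ∑ v ∈ U, Δ := by
            refine Finset.sum_le_sum fun v _ => ?_
            refine le_trans ?_ (hdeg v)
            unfold hypDegree
            refine Finset.card_le_card_of_injOn (fun e => e.1) ?_ ?_
            · intro e he
              simp only [Finset.mem_coe, Finset.mem_filter] at he ⊢
              exact ⟨e.2, (hAe e).2 he.2⟩
            · intro a _ b _ hab; exact Subtype.ext hab
        _ = Δ * U.card := by rw [Finset.sum_const, smul_eq_mul, mul_comm]
    have h3 : (δ - 1) * s.card ≤ (δ - 1) * (k * U.card) := by
      calc (δ - 1) * s.card ≤ Δ * U.card := le_trans h1 h2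
        _ ≤ (k * (δ - 1)) * U.card := Nat.mul_le_mul_right _ hkey
        _ = (δ - 1) * (k * U.card) := by ring
    have hδ1 : 0 < δ - 1 := by omega
    have h4 := Nat.le_of_mul_le_mul_left h3 hδ1
    rwa [mul_comm k U.card] at h4
  obtain ⟨F, hFinj, hFmem⟩ := (Finset.all_card_le_biUnion_card_iff_existsInjective' T).mp hall
  set u : {e // e ∈ ℰ} → V := fun e => (F e).1 with hu
  have huA : ∀ e, u e ∈ A e := by
    intro e
    have := hFmem e
    rw [hT] at this
    exact (Finset.mem_product.mp this).1
  have hu_mem : ∀ e, u e ∈ e.1 := fun e => (hAe e).2 (huA e)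
  have hrank : ∀ e, (φ (amin e.1) : ℕ) < (φ (u e) : ℕ) := by
    intro e
    have hne : u e ≠ amin e.1 := Finset.ne_of_mem_erase (huA e)
    have hle := hamin_le e.1 (u e) (hu_mem e)
    rcases lt_or_eq_of_le hle with h | h
    · exact h
    · exact absurd (φ.injective (Fin.ext h)).symm hne
  have hfiber : ∀ v : V,
      ((Finset.univ : Finset {e // e ∈ ℰ}).filter (fun e => u e = v)).card ≤ k := by
    intro v
    have : ((Finset.univ : Finset {e // e ∈ ℰ}).filter (fun e => u e = v)).card
        ≤ (Finset.univ : Finset (Fin k)).card := by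
      refine Finset.card_le_card_of_injOn (fun e => (F e).2) (fun _ _ => Finset.mem_univ _) ?_
      intro a ha b hb hab
      simp only [Finset.mem_coe, Finset.mem_filter] at ha hb
      apply hFinj
      apply Prod.ext
      · rw [hu] at ha hb; simp only at ha hb; rw [ha.2, hb.2]
      · exact hab
    simpa using this
  -- greedy coloring by induction on rank
  have main : ∀ i : ℕ, ∃ c : V → Fin (k + 1),
      ∀ e : {x // x ∈ ℰ}, (φ (u e) : ℕ) < i → c (u e) ≠ c (amin e.1) := by
    intro i
    induction i with
    | zero => exact ⟨fun _ => ⟨0, Nat.succ_pos k⟩, fun e h => absurd h (Nat.not_lt_zero _)⟩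
    | succ i ih =>
      obtain ⟨c, hc⟩ := ih
      by_cases hi : ∃ e : {x // x ∈ ℰ}, (φ (u e) : ℕ) = i
      · obtain ⟨e₁, he₁⟩ := hi
        set vi := u e₁ with hvi
        set Ei := (Finset.univ : Finset {x // x ∈ ℰ}).filter (fun e => u e = vi) with hEi
        set C := Ei.image (fun e => c (amin e.1)) with hC
        have hCcard : C.card < k + 1 :=
          lt_of_le_of_lt (le_trans Finset.card_image_le (hfiber vi)) (Nat.lt_succ_self k)
        have : ∃ col : Fin (k + 1), col ∉ C := by
          by_contra hcon
          push_neg at hcon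
          have hsub : (Finset.univ : Finset (Fin (k + 1))) ⊆ C := fun x _ => hcon x
          have := Finset.card_le_card hsub
          simp only [Finset.card_univ, Fintype.card_fin] at this
          omega
        obtain ⟨col, hcol⟩ := this
        refine ⟨Function.update c vi col, ?_⟩
        intro e he
        have hamin_ne : amin e.1 ≠ vi := by
          intro h
          have h1 := hrank e
          rw [h] at h1
          omega
        rcases Nat.lt_or_ge (φ (u e) : ℕ) i with hlt | hge
        · have hune : u e ≠ vi := by
            intro h
            rw [h] at hlt
            omega
          rw [Function.update_of_ne hune, Function.update_of_ne hamin_ne]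
          exact hc e hlt
        · have heq : (φ (u e) : ℕ) = i := by omega
          have hue : u e = vi := by
            apply φ.injective
            apply Fin.ext
            rw [heq, ← he₁]
          rw [hue, Function.update_self, Function.update_of_ne hamin_ne]
          intro hcontra
          apply hcol
          rw [hC, hcontra]
          exact Finset.mem_image_of_mem _ (Finset.mem_filter.mpr ⟨Finset.mem_univ e, hue⟩)
      · push_neg at hi
        refine ⟨c, fun e he => hc e ?_⟩
        have := hi e
        omega
  obtain ⟨c, hc⟩ := main n
  refine ⟨c, fun e he => ?_⟩
  have hne : e.Nonempty := Finset.card_pos.mp (lt_of_lt_of_le (by omega) (hedge e he))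
  exact ⟨u ⟨e, he⟩, hu_mem ⟨e, he⟩, amin e, hamin_mem e hne, hc ⟨e, he⟩ (φ (u ⟨e, he⟩)).isLt⟩
end

section
/- Let G be a finite simple graph with minimal vertex degree δ(G) ≥ 1 and maximal vertex degree Δ(G), and let k = ⌈2Δ(G)/δ(G)⌉ (the least natural number k with k·δ(G) ≥ 2Δ(G)). Then G admits a dynamic vertex coloring in k + 1 colors. -/
open Finset

lemma greedy_coloring {V : Type*} [Fintype V] (R : V → V → Prop)
    (hsymm : ∀ x y, R x y → R y x) (hirr : ∀ x, ¬ R x x) (k : ℕ)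
    (hdeg : ∀ y (s : Finset V), (∀ x ∈ s, R x y) → s.card ≤ k) :
    ∃ c : V → Fin (k+1), ∀ x y, R x y → c x ≠ c y := by
  classical
  set n := Fintype.card V with hn
  let e : Fin n ≃ V := (Fintype.equivFin V).symm
  have key : ∀ m : ℕ, ∃ f : Fin n → Fin (k+1),
      ∀ a b : Fin n, a < b → (b : ℕ) < m → R (e a) (e b) → f a ≠ f b := by
    intro m
    induction m with
    | zero => exact ⟨fun _ => 0, fun a b _ h => absurd h (by omega)⟩
    | succ m ih =>
      obtain ⟨f, hf⟩ := ih
      by_cases hm : m < n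
      · set bm : Fin n := ⟨m, hm⟩ with hbm
        set C : Finset (Fin (k+1)) :=
          (univ.filter (fun a : Fin n => a < bm ∧ R (e a) (e bm))).image f with hC
        have hCcard : C.card < k + 1 := by
          have h1 : C.card ≤ (univ.filter (fun a : Fin n => a < bm ∧ R (e a) (e bm))).card :=
            card_image_le
          have h2 : (univ.filter (fun a : Fin n => a < bm ∧ R (e a) (e bm))).card
              ≤ ((univ.filter (fun a : Fin n => a < bm ∧ R (e a) (e bm))).image
                  (fun a => e a)).card := by
            rw [card_image_of_injective _ (fun a b h => e.injective h)]
          have h3 := hdeg (e bm)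
            ((univ.filter (fun a : Fin n => a < bm ∧ R (e a) (e bm))).image (fun a => e a))
            (by
              intro x hx
              obtain ⟨a, ha, rfl⟩ := mem_image.mp hx
              exact ((mem_filter.mp ha).2).2)
          omega
        have hcompl : (Cᶜ : Finset (Fin (k+1))).Nonempty := by
          apply Finset.card_pos.mp
          rw [Finset.card_compl]
          have : C.card < Fintype.card (Fin (k+1)) := by simpa using hCcard
          omega
        obtain ⟨col, hcolmem⟩ := hcompl
        have hcol : col ∉ C := Finset.mem_compl.mp hcolmem
        refine ⟨Function.update f bm col, ?_⟩
        intro a b hab hbm1 hr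
        have hab' : (a : ℕ) < (b : ℕ) := hab
        rcases lt_or_eq_of_le (Nat.lt_succ_iff.mp hbm1) with hblt | hbeq
        · have ha' : a ≠ bm := by
            intro h
            have : (a : ℕ) = m := by rw [h]
            omega
          have hb' : b ≠ bm := by
            intro h
            have : (b : ℕ) = m := by rw [h]
            omega
          rw [Function.update_of_ne ha', Function.update_of_ne hb']
          exact hf a b hab hblt hr
        · have hb' : b = bm := by
            apply Fin.ext; simp [hbm, hbeq]
          have ha' : a ≠ bm := by
            intro h; rw [h, hb'] at hab; exact absurd hab (lt_irrefl _)
          rw [Function.update_of_ne ha', hb', Function.update_self]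
          intro hcontra
          apply hcol
          rw [hC]
          apply Finset.mem_image.mpr
          refine ⟨a, ?_, hcontra⟩
          simp only [mem_filter, mem_univ, true_and]
          rw [hb'] at hab hr
          exact ⟨hab, hr⟩
      · exact ⟨f, fun a b hab hbm hr => hf a b hab (by omega) hr⟩
  obtain ⟨f, hf⟩ := key n
  refine ⟨fun v => f (e.symm v), ?_⟩
  intro x y hr
  have hxy : x ≠ y := fun h => hirr y (h ▸ hr)
  have hixy : e.symm x ≠ e.symm y := fun h => hxy (by simpa using congrArg e h)
  rcases lt_or_gt_of_ne hixy with h | h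
  · exact hf _ _ h (Fin.is_lt _) (by simpa using hr)
  · exact (hf _ _ h (Fin.is_lt _) (by simpa using hsymm x y hr)).symm


open scoped Classical in
lemma exists_picks {V : Type*} [Fintype V] (G : SimpleGraph V) [DecidableRel G.Adj] (k : ℕ)
    (hδ : 1 ≤ G.minDegree) (hk₁ : 2 * G.maxDegree ≤ k * G.minDegree) :
    ∃ p : V → V × V,
      (∀ v, 2 ≤ G.degree v →
        G.Adj v (p v).1 ∧ G.Adj v (p v).2 ∧ (p v).1 ≠ (p v).2) ∧
      (∀ y : V, (univ.filter
          (fun v => 2 ≤ G.degree v ∧ ((p v).1 = y ∨ (p v).2 = y))).card ≤ k) := by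
  classical
  let r : (V × Fin 2) ⊕ (V × V) →
      Finset (((V × Fin 2) ⊕ (V × V)) ⊕ ((V × V) ⊕ (V × Fin k))) := fun x =>
    match x with
    | Sum.inl q =>
        if 2 ≤ G.degree q.1 then
          (G.neighborFinset q.1).image (fun u => Sum.inr (Sum.inl (q.1, u)))
        else {Sum.inl (Sum.inl q)}
    | Sum.inr d =>
        if G.Adj d.1 d.2 then
          insert (Sum.inr (Sum.inl d))
            ((univ : Finset (Fin k)).image (fun j => Sum.inr (Sum.inr (d.2, j))))
        else {Sum.inl (Sum.inr d)}
  have hall : ∀ A : Finset ((V × Fin 2) ⊕ (V × V)), A.card ≤ (A.biUnion r).card := by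
    intro A
    set T : Finset V := univ.filter
      (fun v => 2 ≤ G.degree v ∧
        (Sum.inl (v, (0 : Fin 2)) ∈ A ∨ Sum.inl (v, (1 : Fin 2)) ∈ A)) with hT
    set A₂ : Finset (V × V) := univ.filter (fun d => G.Adj d.1 d.2 ∧ Sum.inr d ∈ A) with hA₂
    set Hs : Finset V := A₂.image Prod.snd with hHs
    set J : Finset ((V × Fin 2) ⊕ (V × V)) := A.filter
      (fun x => match x with
        | Sum.inl q => ¬ 2 ≤ G.degree q.1
        | Sum.inr d => ¬ G.Adj d.1 d.2) with hJ
    set W : Finset (V × V) := T.biUnion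
      (fun v => ((G.neighborFinset v) \ Hs).image (fun u => (v, u))) with hW
    -- step 1 : |A| ≤ |J| + 2|T| + |A₂|
    have step1 : A.card ≤ J.card + T.card * 2 + A₂.card := by
      set L2 := (T ×ˢ (univ : Finset (Fin 2))).image
        (Sum.inl : V × Fin 2 → (V × Fin 2) ⊕ (V × V)) with hL2
      set R2 := A₂.image (Sum.inr : V × V → (V × Fin 2) ⊕ (V × V)) with hR2
      have hsub : A ⊆ J ∪ L2 ∪ R2 := by
        intro x hx
        match x with
        | Sum.inl q =>
          by_cases hq : 2 ≤ G.degree q.1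
          · apply mem_union_left; apply mem_union_right
            apply mem_image.mpr
            refine ⟨q, ?_, rfl⟩
            apply Finset.mem_product.mpr
            refine ⟨?_, mem_univ _⟩
            rw [hT]
            simp only [mem_filter, mem_univ, true_and]
            refine ⟨hq, ?_⟩
            rcases q with ⟨v, i⟩
            fin_cases i
            · exact Or.inl hx
            · exact Or.inr hx
          · apply mem_union_left; apply mem_union_left
            rw [hJ]; exact mem_filter.mpr ⟨hx, hq⟩
        | Sum.inr d =>
          by_cases hd : G.Adj d.1 d.2
          · apply mem_union_right
            rw [hR2]
            exact mem_image.mpr ⟨d, by rw [hA₂]; simp [hd, hx], rfl⟩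
          · apply mem_union_left; apply mem_union_left
            rw [hJ]; exact mem_filter.mpr ⟨hx, hd⟩
      calc A.card ≤ (J ∪ L2 ∪ R2).card :=
            card_le_card hsub
        _ ≤ (J ∪ L2).card + R2.card :=
            card_union_le _ _
        _ ≤ J.card + L2.card + R2.card := by
            have := card_union_le J L2
            omega
        _ ≤ J.card + T.card * 2 + A₂.card := by
            have h1 : L2.card ≤ T.card * 2 := by
              calc L2.card
                  ≤ (T ×ˢ (univ : Finset (Fin 2))).card := card_image_le
                _ = T.card * 2 := by rw [card_product]; simp
            have h2 : R2.card ≤ A₂.card := by rw [hR2]; exact card_image_le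
            omega
    -- step 2 : |W| = Σ_{v ∈ T} |N v \ Hs|
    have step2 : W.card = ∑ v ∈ T, ((G.neighborFinset v) \ Hs).card := by
      rw [hW]
      rw [card_biUnion]
      · apply Finset.sum_congr rfl
        intro v _
        exact card_image_of_injective _ (fun a b h => (Prod.mk.injEq _ _ _ _).mp h |>.2)
      · intro a _ b _ hab
        apply Finset.disjoint_left.mpr
        intro x hx hx'
        simp only [mem_image] at hx hx'
        obtain ⟨u, _, rfl⟩ := hx
        obtain ⟨u', _, h⟩ := hx'
        exact hab ((Prod.mk.injEq _ _ _ _).mp h.symm |>.1)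
    -- step 3 : double counting
    have step3 : ∑ v ∈ T, ((G.neighborFinset v) ∩ Hs).card ≤ G.maxDegree * Hs.card := by
      have hrw : ∀ v, ((G.neighborFinset v) ∩ Hs).card
          = ∑ u ∈ Hs, (if G.Adj v u then 1 else 0) := by
        intro v
        rw [inter_comm, ← Finset.card_filter]
        congr 1
        apply Finset.filter_congr
        intro u hu
        simp [SimpleGraph.mem_neighborFinset]
      calc ∑ v ∈ T, ((G.neighborFinset v) ∩ Hs).card
          = ∑ v ∈ T, ∑ u ∈ Hs, (if G.Adj v u then 1 else 0) := by
            exact Finset.sum_congr rfl (fun v _ => hrw v)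
        _ = ∑ u ∈ Hs, ∑ v ∈ T, (if G.Adj v u then 1 else 0) := Finset.sum_comm
        _ ≤ ∑ u ∈ Hs, G.maxDegree := by
            apply Finset.sum_le_sum
            intro u _
            calc ∑ v ∈ T, (if G.Adj v u then 1 else 0)
                = (T.filter (fun v => G.Adj v u)).card := (Finset.card_filter _ _).symm
              _ ≤ (G.neighborFinset u).card := by
                  apply card_le_card
                  intro v hv
                  rw [SimpleGraph.mem_neighborFinset]
                  exact ((mem_filter.mp hv).2).symm
              _ = G.degree u := G.card_neighborFinset_eq_degree u
              _ ≤ G.maxDegree := G.degree_le_maxDegree u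
        _ = G.maxDegree * Hs.card := by rw [Finset.sum_const, smul_eq_mul, mul_comm]
    -- step 4 : 2|T| ≤ |W| + k|Hs|
    have step4 : 2 * T.card ≤ W.card + k * Hs.card := by
      set δ := G.minDegree with hδdef
      have perv : ∀ v ∈ T, 2 * δ ≤ δ * ((G.neighborFinset v) \ Hs).card
          + 2 * ((G.neighborFinset v) ∩ Hs).card := by
        intro v hv
        have hvdeg : 2 ≤ G.degree v := (mem_filter.mp hv).2.1
        have hsplit : ((G.neighborFinset v) \ Hs).card + ((G.neighborFinset v) ∩ Hs).card
            = G.degree v := by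
          rw [← G.card_neighborFinset_eq_degree v]
          have := Finset.card_inter_add_card_sdiff (G.neighborFinset v) Hs
          omega
        have hδle : δ ≤ G.degree v := G.minDegree_le_degree v
        set a := ((G.neighborFinset v) \ Hs).card
        set b := ((G.neighborFinset v) ∩ Hs).card
        rcases le_or_gt δ 2 with h | h
        · calc 2 * δ ≤ δ * G.degree v := by
                have : 2 ≤ G.degree v := hvdeg
                calc 2 * δ = δ * 2 := by ring
                  _ ≤ δ * G.degree v := Nat.mul_le_mul_left δ hvdeg
            _ = δ * (a + b) := by rw [hsplit]
            _ = δ * a + δ * b := by ring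
            _ ≤ δ * a + 2 * b := by
                have : δ * b ≤ 2 * b := Nat.mul_le_mul_right b h
                omega
        · calc 2 * δ ≤ 2 * G.degree v := by omega
            _ = 2 * (a + b) := by rw [hsplit]
            _ = 2 * a + 2 * b := by ring
            _ ≤ δ * a + 2 * b := by
                have : 2 * a ≤ δ * a := Nat.mul_le_mul_right a (le_of_lt h)
                omega
      have hsum : 2 * δ * T.card ≤ δ * W.card + 2 * (G.maxDegree * Hs.card) := by
        calc 2 * δ * T.card = ∑ _v ∈ T, 2 * δ := by rw [Finset.sum_const, smul_eq_mul, mul_comm]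
          _ ≤ ∑ v ∈ T, (δ * ((G.neighborFinset v) \ Hs).card
              + 2 * ((G.neighborFinset v) ∩ Hs).card) := Finset.sum_le_sum perv
          _ = δ * (∑ v ∈ T, ((G.neighborFinset v) \ Hs).card)
              + 2 * (∑ v ∈ T, ((G.neighborFinset v) ∩ Hs).card) := by
                rw [Finset.sum_add_distrib, Finset.mul_sum, Finset.mul_sum]
          _ ≤ δ * W.card + 2 * (G.maxDegree * Hs.card) := by
                rw [step2]
                have := step3
                omega
      have hfin : 2 * δ * T.card ≤ δ * (W.card + k * Hs.card) := by
        have h2Δ : 2 * (G.maxDegree * Hs.card) ≤ δ * (k * Hs.card) := by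
          calc 2 * (G.maxDegree * Hs.card) = (2 * G.maxDegree) * Hs.card := by ring
            _ ≤ (k * δ) * Hs.card := Nat.mul_le_mul_right _ hk₁
            _ = δ * (k * Hs.card) := by ring
        calc 2 * δ * T.card ≤ δ * W.card + 2 * (G.maxDegree * Hs.card) := hsum
          _ ≤ δ * W.card + δ * (k * Hs.card) := by omega
          _ = δ * (W.card + k * Hs.card) := by ring
      have : δ * (2 * T.card) ≤ δ * (W.card + k * Hs.card) := by
        calc δ * (2 * T.card) = 2 * δ * T.card := by ring
          _ ≤ δ * (W.card + k * Hs.card) := hfin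
      exact Nat.le_of_mul_le_mul_left this (by omega)
    -- step 5 : the lower bound set inside biUnion
    have step5 : J.card + (W.card + A₂.card) + Hs.card * k ≤ (A.biUnion r).card := by
      set S₁ := J.image (Sum.inl : ((V × Fin 2) ⊕ (V × V)) →
        ((V × Fin 2) ⊕ (V × V)) ⊕ ((V × V) ⊕ (V × Fin k))) with hS₁
      set S₂ := (W ∪ A₂).image
        (fun d : V × V => (Sum.inr (Sum.inl d) :
          ((V × Fin 2) ⊕ (V × V)) ⊕ ((V × V) ⊕ (V × Fin k)))) with hS₂
      set S₃ := (Hs ×ˢ (univ : Finset (Fin k))).image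
        (fun q => (Sum.inr (Sum.inr q) :
          ((V × Fin 2) ⊕ (V × V)) ⊕ ((V × V) ⊕ (V × Fin k)))) with hS₃
      have hsub : S₁ ∪ S₂ ∪ S₃ ⊆ A.biUnion r := by
        intro x hx
        rcases mem_union.mp hx with hx | hx
        · rcases mem_union.mp hx with hx | hx
          · -- junk
            obtain ⟨y, hy, rfl⟩ := mem_image.mp hx
            rw [hJ] at hy
            obtain ⟨hyA, hyj⟩ := mem_filter.mp hy
            apply mem_biUnion.mpr
            refine ⟨y, hyA, ?_⟩
            match y with
            | Sum.inl q => simp only [r]; rw [if_neg hyj]; exact mem_singleton_self _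
            | Sum.inr d => simp only [r]; rw [if_neg hyj]; exact mem_singleton_self _
          · -- b-nodes
            obtain ⟨d, hd, rfl⟩ := mem_image.mp hx
            rcases mem_union.mp hd with hd | hd
            · -- from W : dart out of T
              rw [hW] at hd
              obtain ⟨v, hvT, hd⟩ := mem_biUnion.mp hd
              obtain ⟨u, hu, rfl⟩ := mem_image.mp hd
              have hu' : u ∈ G.neighborFinset v := (mem_sdiff.mp hu).1
              obtain ⟨hvdeg, hvA⟩ := (mem_filter.mp hvT).2
              rcases hvA with hvA | hvA
              · apply mem_biUnion.mpr
                refine ⟨Sum.inl (v, 0), hvA, ?_⟩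
                simp only [r]; rw [if_pos hvdeg]
                exact mem_image.mpr ⟨u, hu', rfl⟩
              · apply mem_biUnion.mpr
                refine ⟨Sum.inl (v, 1), hvA, ?_⟩
                simp only [r]; rw [if_pos hvdeg]
                exact mem_image.mpr ⟨u, hu', rfl⟩
            · -- from A₂ : its own a-dart
              rw [hA₂] at hd
              have hdm := mem_filter.mp hd
              have hadj := hdm.2.1
              have hdA := hdm.2.2
              apply mem_biUnion.mpr
              refine ⟨Sum.inr d, hdA, ?_⟩
              simp only [r]; rw [if_pos hadj]
              exact mem_insert_self _ _
        · -- slots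
          obtain ⟨q, hq, rfl⟩ := mem_image.mp hx
          obtain ⟨hq1, -⟩ := Finset.mem_product.mp hq
          rw [hHs] at hq1
          obtain ⟨d, hdA₂, hdq⟩ := mem_image.mp hq1
          rw [hA₂] at hdA₂
          have hadj := (mem_filter.mp hdA₂).2.1
          have hdA := (mem_filter.mp hdA₂).2.2
          apply mem_biUnion.mpr
          refine ⟨Sum.inr d, hdA, ?_⟩
          simp only [r]; rw [if_pos hadj]
          apply mem_insert_of_mem
          apply mem_image.mpr
          refine ⟨q.2, mem_univ _, ?_⟩
          rw [hdq]
      have hd12 : Disjoint S₁ S₂ := by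
        apply disjoint_left.mpr
        intro x hx hx'
        obtain ⟨y, -, rfl⟩ := mem_image.mp hx
        obtain ⟨d, -, h⟩ := mem_image.mp hx'
        cases h
      have hd13 : Disjoint S₁ S₃ := by
        apply disjoint_left.mpr
        intro x hx hx'
        obtain ⟨y, -, rfl⟩ := mem_image.mp hx
        obtain ⟨q, -, h⟩ := mem_image.mp hx'
        cases h
      have hd23 : Disjoint S₂ S₃ := by
        apply disjoint_left.mpr
        intro x hx hx'
        obtain ⟨d, -, rfl⟩ := mem_image.mp hx
        obtain ⟨q, -, h⟩ := mem_image.mp hx'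
        have := Sum.inr_injective h
        cases this
      have hdisjWA : Disjoint W A₂ := by
        apply disjoint_left.mpr
        intro d hdW hdA₂
        rw [hW] at hdW
        obtain ⟨v, -, hd⟩ := mem_biUnion.mp hdW
        obtain ⟨u, hu, rfl⟩ := mem_image.mp hd
        have hnot : u ∉ Hs := (mem_sdiff.mp hu).2
        apply hnot
        rw [hHs]
        exact mem_image.mpr ⟨(v, u), hdA₂, rfl⟩
      have hcards : (S₁ ∪ S₂ ∪ S₃).card = J.card + (W.card + A₂.card) + Hs.card * k := by
        rw [card_union_of_disjoint (disjoint_union_left.mpr ⟨hd13, hd23⟩),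
            card_union_of_disjoint hd12]
        congr 1
        · congr 1
          · rw [hS₁]; exact card_image_of_injective _ Sum.inl_injective
          · rw [hS₂]
            rw [card_image_of_injective _ (fun a b h => by
              exact Sum.inl_injective (Sum.inr_injective h))]
            exact card_union_of_disjoint hdisjWA
        · rw [hS₃]
          rw [card_image_of_injective _ (fun a b h => by
            exact Sum.inr_injective (Sum.inr_injective h))]
          rw [card_product, card_univ, Fintype.card_fin]
      calc J.card + (W.card + A₂.card) + Hs.card * k = (S₁ ∪ S₂ ∪ S₃).card := hcards.symm
        _ ≤ (A.biUnion r).card := card_le_card hsub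
    have hmc : Hs.card * k = k * Hs.card := Nat.mul_comm _ _
    have h1 := step1
    have h4 := step4
    have h5 := step5
    omega
  obtain ⟨f, hfinj, hf⟩ := (Finset.all_card_le_biUnion_card_iff_exists_injective r).mp hall
  -- extract picks
  have hpick : ∀ v, 2 ≤ G.degree v → ∀ i : Fin 2,
      ∃ u, G.Adj v u ∧ f (Sum.inl (v, i)) = Sum.inr (Sum.inl (v, u)) := by
    intro v hv i
    have := hf (Sum.inl (v, i))
    simp only [r] at this
    rw [if_pos hv] at this
    obtain ⟨u, hu, heq⟩ := mem_image.mp this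
    exact ⟨u, (SimpleGraph.mem_neighborFinset _ _ _).mp hu, heq.symm⟩
  let q : V → Fin 2 → V := fun v i =>
    if h : 2 ≤ G.degree v then (hpick v h i).choose else v
  have hq : ∀ v (h : 2 ≤ G.degree v) (i : Fin 2),
      G.Adj v (q v i) ∧ f (Sum.inl (v, i)) = Sum.inr (Sum.inl (v, q v i)) := by
    intro v h i
    simp only [q, dif_pos h]
    exact (hpick v h i).choose_spec
  refine ⟨fun v => (q v 0, q v 1), ?_, ?_⟩
  · intro v hv
    refine ⟨(hq v hv 0).1, (hq v hv 1).1, ?_⟩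
    intro hcontra
    have hc : q v 0 = q v 1 := hcontra
    have h0 := (hq v hv 0).2
    have h1 := (hq v hv 1).2
    rw [hc] at h0
    have := hfinj (h0.trans h1.symm)
    simp at this
  · intro y
    show (univ.filter (fun v => 2 ≤ G.degree v ∧ (q v 0 = y ∨ q v 1 = y))).card ≤ k
    set Pk := univ.filter
      (fun v => 2 ≤ G.degree v ∧ (q v 0 = y ∨ q v 1 = y)) with hPk
    have hmap : ∀ v ∈ Pk, ∃ j : Fin k, f (Sum.inr (v, y)) = Sum.inr (Sum.inr (y, j)) := by
      intro v hv
      obtain ⟨hvdeg, hvy⟩ := (mem_filter.mp hv).2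
      have hadjv : G.Adj v y := by
        rcases hvy with h | h
        · exact h ▸ (hq v hvdeg 0).1
        · exact h ▸ (hq v hvdeg 1).1
      have hmem := hf (Sum.inr (v, y))
      simp only [r] at hmem
      rw [if_pos hadjv] at hmem
      have hne : f (Sum.inr (v, y)) ≠ Sum.inr (Sum.inl (v, y)) := by
        intro hcontra
        rcases hvy with h | h
        · have h2 := (hq v hvdeg 0).2
          rw [h] at h2
          have := hfinj (hcontra.trans h2.symm)
          cases this
        · have h2 := (hq v hvdeg 1).2
          rw [h] at h2
          have := hfinj (hcontra.trans h2.symm)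
          cases this
      rcases mem_insert.mp hmem with h | h
      · exact absurd h hne
      · obtain ⟨j, -, hj⟩ := mem_image.mp h
        exact ⟨j, hj.symm⟩
    rcases Pk.eq_empty_or_nonempty with he | hne
    · rw [he]; simp
    · obtain ⟨v₀, hv₀⟩ := hne
      have : Nonempty (Fin k) := ⟨(hmap v₀ hv₀).choose⟩
      have hcard : Pk.card ≤ (univ : Finset (Fin k)).card := by
        apply Finset.card_le_card_of_injOn
          (fun v => if h : v ∈ Pk then (hmap v h).choose else Classical.arbitrary (Fin k))
        · intro v _
          exact mem_univ _
        · intro a ha b hb hab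
          have ha0 : a ∈ Pk := mem_coe.mp ha
          have hb0 : b ∈ Pk := mem_coe.mp hb
          simp only [dif_pos ha0, dif_pos hb0] at hab
          have ha' := (hmap a ha0).choose_spec
          have hb' := (hmap b hb0).choose_spec
          rw [hab] at ha'
          have h2 := hfinj (ha'.trans hb'.symm)
          have h3 := Sum.inr_injective h2
          exact ((Prod.mk.injEq _ _ _ _).mp h3).1
      simpa using hcard


/-- A vertex coloring `c` of a simple graph `G` in `m` colors is dynamic if every
vertex of degree at least 2 has two neighbors receiving different colors. -/
def DynamicColoring {V : Type*} [Fintype V] (G : SimpleGraph V) [DecidableRel G.Adj]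
    (m : ℕ) (c : V → Fin m) : Prop :=
  ∀ v : V, 2 ≤ G.degree v →
    ∃ u ∈ G.neighborSet v, ∃ w ∈ G.neighborSet v, c u ≠ c w

set_option maxHeartbeats 2000000 in
theorem dynamic_coloring_succ_ceil
    {V : Type*} [Fintype V] (G : SimpleGraph V) [DecidableRel G.Adj] (k : ℕ)
    (hδ : 1 ≤ G.minDegree)
    (hk₁ : 2 * G.maxDegree ≤ k * G.minDegree)
    (hk₂ : ∀ m : ℕ, 2 * G.maxDegree ≤ m * G.minDegree → k ≤ m) :
    ∃ c : V → Fin (k + 1), DynamicColoring G (k + 1) c := by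
  classical
  obtain ⟨p, hp, hload⟩ := exists_picks G k hδ hk₁
  set Rel : V → V → Prop := fun x y => ∃ v, 2 ≤ G.degree v ∧
    (((p v).1 = x ∧ (p v).2 = y) ∨ ((p v).1 = y ∧ (p v).2 = x)) with hRel
  have hsymm : ∀ x y, Rel x y → Rel y x := by
    rintro x y ⟨v, hv, h | h⟩
    exacts [⟨v, hv, Or.inr h⟩, ⟨v, hv, Or.inl h⟩]
  have hirr : ∀ x, ¬ Rel x x := by
    rintro x ⟨v, hv, h | h⟩ <;>
      exact (hp v hv).2.2 (h.1.trans h.2.symm)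
  have hdeg : ∀ y (s : Finset V), (∀ x ∈ s, Rel x y) → s.card ≤ k := by
    intro y s hs
    calc s.card
        ≤ (Finset.univ.filter
            (fun v => 2 ≤ G.degree v ∧ ((p v).1 = y ∨ (p v).2 = y))).card := by
          apply Finset.card_le_card_of_injOn
            (fun x => if h : Rel x y then h.choose else x)
          · intro x hx
            have hx0 : Rel x y := hs x hx
            simp only [dif_pos hx0, Finset.mem_coe]
            obtain ⟨hd, hpat⟩ := hx0.choose_spec
            rw [Finset.mem_filter]
            refine ⟨Finset.mem_univ _, hd, ?_⟩
            rcases hpat with ⟨h1, h2⟩ | ⟨h1, h2⟩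
            · exact Or.inr h2
            · exact Or.inl h1
          · intro a ha b hb hab
            have ha0 : Rel a y := hs a (Finset.mem_coe.mp ha)
            have hb0 : Rel b y := hs b (Finset.mem_coe.mp hb)
            simp only [dif_pos ha0, dif_pos hb0] at hab
            obtain ⟨hda, hpa⟩ := ha0.choose_spec
            obtain ⟨hdb, hpb⟩ := hb0.choose_spec
            rw [hab] at hda hpa
            have hne := (hp _ hdb).2.2
            rcases hpa with ⟨h1, h2⟩ | ⟨h1, h2⟩ <;> rcases hpb with ⟨h3, h4⟩ | ⟨h3, h4⟩
            · exact h1.symm.trans h3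
            · exact absurd (h3.trans h2.symm) hne
            · exact absurd (h1.trans h4.symm) hne
            · exact h2.symm.trans h4
      _ ≤ k := hload y
  obtain ⟨c, hc⟩ := greedy_coloring Rel hsymm hirr k hdeg
  refine ⟨c, ?_⟩
  intro v hv
  obtain ⟨h1, h2, hne⟩ := hp v hv
  exact ⟨(p v).1, (G.mem_neighborSet v _).mpr h1, (p v).2, (G.mem_neighborSet v _).mpr h2,
    hc _ _ ⟨v, hv, Or.inl ⟨rfl, rfl⟩⟩⟩
end

section
/- Let H be a hypergraph on a finite vertex set V such that every vertex has degree at most Δ and every hyperedge contains at least δ vertices, where δ ≥ 2. Let k = ⌈2Δ/δ⌉ (the least natural number k with k·δ ≥ 2Δ). Then there exists an image f of H such that every vertex has image-degree at most k under f. -/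
/-- `f` is an image of the hypergraph with hyperedge family `ℰ`: it assigns to every
hyperedge `e ∈ ℰ` a 2-element subset `f e ⊆ e`. -/
def IsImage {V : Type*} (ℰ : Finset (Finset V)) (f : Finset V → Finset V) : Prop :=
  ∀ e ∈ ℰ, f e ⊆ e ∧ (f e).card = 2

/-- The image-degree of a vertex `v` under `f`: the number of hyperedges `e ∈ ℰ`
with `v ∈ f e`. -/
def imageDegree {V : Type*} [DecidableEq V] (ℰ : Finset (Finset V))
    (f : Finset V → Finset V) (v : V) : ℕ :=
  (ℰ.filter (fun e => v ∈ f e)).card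

namespace HypAux
set_option linter.unusedSectionVars false

variable {V : Type*} [DecidableEq V]

/-- One swap: in edge `s.1`, replace `x` by `s.2`. -/
def applySwap (f : Finset V → Finset V) (x : V) (s : Finset V × V) :
    Finset V → Finset V :=
  Function.update f s.1 (insert s.2 ((f s.1).erase x))

/-- Apply a sequence of swaps along a walk starting at `x`. -/
def swapped (f : Finset V → Finset V) : V → List (Finset V × V) → Finset V → Finset V
  | _, [] => f
  | x, s :: rest => swapped (applySwap f x s) s.2 rest

/-- A walk: from `x`, each step `(e, u)` uses an edge `e ∈ ℰ` with `x ∈ f e`,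
moving to `u ∈ e` with `u ∉ f e`. -/
def IsWalk (ℰ : Finset (Finset V)) (f : Finset V → Finset V) : V → List (Finset V × V) → Prop
  | _, [] => True
  | x, s :: rest => s.1 ∈ ℰ ∧ x ∈ f s.1 ∧ s.2 ∈ s.1 ∧ s.2 ∉ f s.1 ∧ IsWalk ℰ f s.2 rest

def endOf (x : V) (steps : List (Finset V × V)) : V := (steps.map Prod.snd).getLastD x

@[simp] lemma endOf_nil (x : V) : endOf x ([] : List (Finset V × V)) = x := rfl

@[simp] lemma endOf_cons (x : V) (s : Finset V × V) (t : List (Finset V × V)) :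
    endOf x (s :: t) = endOf s.2 t := by
  simp only [endOf, List.map_cons, List.getLastD_cons]

lemma endOf_append (x : V) (a b : List (Finset V × V)) :
    endOf x (a ++ b) = endOf (endOf x a) b := by
  induction a generalizing x with
  | nil => simp
  | cons s t ih => simp [ih]

lemma endOf_mem {x : V} {t : List (Finset V × V)} (h : t ≠ []) :
    endOf x t ∈ t.map Prod.snd := by
  have : endOf x t ∈ x :: t.map Prod.snd := List.getLastD_mem_cons
  rcases List.mem_cons.mp this with h1 | h1
  · -- endOf x t = x; show it is still a member
    cases t with
    | nil => exact absurd rfl h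
    | cons s r =>
      -- endOf x (s::r) = endOf s.2 r ∈ s.2 :: r.map snd
      have : endOf s.2 r ∈ s.2 :: r.map Prod.snd := List.getLastD_mem_cons
      simpa using this
  · exact h1

lemma isWalk_append {ℰ : Finset (Finset V)} {f : Finset V → Finset V}
    (x : V) (a b : List (Finset V × V)) :
    IsWalk ℰ f x (a ++ b) ↔ IsWalk ℰ f x a ∧ IsWalk ℰ f (endOf x a) b := by
  induction a generalizing x with
  | nil => simp [IsWalk]
  | cons s t ih => simp [IsWalk, ih, and_assoc]

lemma isWalk_congr {ℰ : Finset (Finset V)} {f f' : Finset V → Finset V}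
    {x : V} {steps : List (Finset V × V)}
    (h : ∀ p ∈ steps, f' p.1 = f p.1) (hw : IsWalk ℰ f x steps) :
    IsWalk ℰ f' x steps := by
  induction steps generalizing x with
  | nil => trivial
  | cons s t ih =>
    obtain ⟨h1, h2, h3, h4, h5⟩ := hw
    have hs : f' s.1 = f s.1 := h s (by simp)
    exact ⟨h1, hs ▸ h2, h3, hs ▸ h4, ih (fun p hp => h p (by simp [hp])) h5⟩


lemma imageDegree_update (ℰ : Finset (Finset V)) (f : Finset V → Finset V)
    {e : Finset V} (he : e ∈ ℰ) (s : Finset V) (v : V) :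
    imageDegree ℰ (Function.update f e s) v + (if v ∈ f e then 1 else 0)
      = imageDegree ℰ f v + (if v ∈ s then 1 else 0) := by
  classical
  unfold imageDegree
  conv_lhs => rw [← Finset.insert_erase he]
  conv_rhs => rw [← Finset.insert_erase he]
  rw [Finset.filter_insert, Finset.filter_insert]
  have he' : e ∉ ℰ.erase e := Finset.notMem_erase e ℰ
  have hfe : Finset.filter (fun e' => v ∈ Function.update f e s e') (ℰ.erase e)
      = Finset.filter (fun e' => v ∈ f e') (ℰ.erase e) := by
    apply Finset.filter_congr
    intro x hx
    rw [Function.update_of_ne (Finset.ne_of_mem_erase hx)]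
  have hnm1 : e ∉ Finset.filter (fun e' => v ∈ Function.update f e s e') (ℰ.erase e) :=
    fun h => he' (Finset.filter_subset _ _ h)
  have hnm2 : e ∉ Finset.filter (fun e' => v ∈ f e') (ℰ.erase e) :=
    fun h => he' (Finset.filter_subset _ _ h)
  rw [Function.update_self] at *
  by_cases h1 : v ∈ s <;> by_cases h2 : v ∈ f e <;>
    simp [h1, h2, Finset.card_insert_of_notMem, hnm1, hnm2, hfe]

@[simp] lemma applySwap_self (f : Finset V → Finset V) (x : V) (e : Finset V) (u : V) :
    applySwap f x (e, u) e = insert u ((f e).erase x) := by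
  simp [applySwap]

lemma applySwap_ne (f : Finset V → Finset V) (x : V) (e : Finset V) (u : V)
    {e' : Finset V} (h : e' ≠ e) : applySwap f x (e, u) e' = f e' := by
  simp [applySwap, Function.update_of_ne h]

lemma isImage_applySwap {ℰ : Finset (Finset V)} {f : Finset V → Finset V} {x : V}
    {e : Finset V} {u : V}
    (himg : IsImage ℰ f) (he : e ∈ ℰ) (hx : x ∈ f e) (hu : u ∈ e) (hu' : u ∉ f e) :
    IsImage ℰ (applySwap f x (e, u)) := by
  intro e' he'
  by_cases h : e' = e
  · subst h
    have hsub : f e' ⊆ e' := (himg e' he').1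
    have hcard : (f e').card = 2 := (himg e' he').2
    rw [applySwap_self]
    constructor
    · exact Finset.insert_subset hu (Finset.Subset.trans (Finset.erase_subset _ _) hsub)
    · rw [Finset.card_insert_of_notMem (fun h => hu' (Finset.erase_subset _ _ h)),
        Finset.card_erase_of_mem hx, hcard]
  · rw [applySwap_ne _ _ _ _ h]
    exact himg e' he'

lemma applySwap_degree {ℰ : Finset (Finset V)} {f : Finset V → Finset V} {x : V}
    {e : Finset V} {u : V} (he : e ∈ ℰ) (hx : x ∈ f e) (hu' : u ∉ f e) :
    imageDegree ℰ (applySwap f x (e, u)) x + 1 = imageDegree ℰ f x ∧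
    imageDegree ℰ (applySwap f x (e, u)) u = imageDegree ℰ f u + 1 ∧
    ∀ v, v ≠ x → v ≠ u → imageDegree ℰ (applySwap f x (e, u)) v = imageDegree ℰ f v := by
  have hxu : x ≠ u := fun h => hu' (h ▸ hx)
  refine ⟨?_, ?_, ?_⟩
  · have := imageDegree_update ℰ f he (insert u ((f e).erase x)) x
    have hxs : x ∉ insert u ((f e).erase x) := by
      simp [hxu]
    simpa [applySwap, hx, hxs] using this
  · have := imageDegree_update ℰ f he (insert u ((f e).erase x)) u
    simpa [applySwap, hu'] using this
  · intro v hvx hvu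
    have := imageDegree_update ℰ f he (insert u ((f e).erase x)) v
    by_cases hv : v ∈ f e
    · have hvs : v ∈ insert u ((f e).erase x) := by simp [Finset.mem_erase, hvx, hv]
      simpa [applySwap, hv, hvs] using this
    · have hvs : v ∉ insert u ((f e).erase x) := by
        simp only [Finset.mem_insert, Finset.mem_erase]
        push_neg
        exact ⟨hvu, fun _ => hv⟩
      simpa [applySwap, hv, hvs] using this


lemma swapped_spec (ℰ : Finset (Finset V)) :
    ∀ (steps : List (Finset V × V)) (f : Finset V → Finset V) (x : V),
      IsImage ℰ f → IsWalk ℰ f x steps → (x :: steps.map Prod.snd).Nodup →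
      (steps.map Prod.fst).Nodup → steps ≠ [] →
      IsImage ℰ (swapped f x steps) ∧
      imageDegree ℰ (swapped f x steps) x + 1 = imageDegree ℰ f x ∧
      imageDegree ℰ (swapped f x steps) (endOf x steps)
        = imageDegree ℰ f (endOf x steps) + 1 ∧
      ∀ v, v ≠ x → v ≠ endOf x steps →
        imageDegree ℰ (swapped f x steps) v = imageDegree ℰ f v := by
  intro steps
  induction steps with
  | nil => intro f x _ _ _ _ h; exact absurd rfl h
  | cons s rest ih =>
    intro f x himg hw hnd hed _
    obtain ⟨he, hx, hu, hu', hw'⟩ := hw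
    obtain ⟨e, u⟩ := s
    have hxu : x ≠ u := fun h => hu' (h ▸ hx)
    have himg' : IsImage ℰ (applySwap f x (e, u)) := isImage_applySwap himg he hx hu hu'
    obtain ⟨hd1, hd2, hd3⟩ := applySwap_degree (f := f) (x := x) he hx hu'
    by_cases hrest : rest = []
    · subst hrest
      refine ⟨himg', ?_, ?_, ?_⟩
      · exact hd1
      · simpa [swapped] using hd2
      · intro v hvx hvu
        exact hd3 v hvx (by simpa using hvu)
    · -- rest ≠ []
      set f' := applySwap f x (e, u) with hf'
      have hedges : ∀ p ∈ rest, f' p.1 = f p.1 := by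
        intro p hp
        have : p.1 ≠ e := by
          have : e ∉ rest.map Prod.fst := by
            simpa using (List.nodup_cons.mp hed).1
          intro hpe
          exact this (hpe ▸ List.mem_map_of_mem (f := Prod.fst) hp)
        exact applySwap_ne _ _ _ _ this
      have hw'' : IsWalk ℰ f' u rest := isWalk_congr hedges hw'
      have hnd' : (u :: rest.map Prod.snd).Nodup := by
        simpa using (List.nodup_cons.mp hnd).2
      have hed' : (rest.map Prod.fst).Nodup := (List.nodup_cons.mp hed).2
      obtain ⟨hg, hg1, hg2, hg3⟩ := ih f' u himg' hw'' hnd' hed' hrest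
      set y := endOf u rest with hy
      have hymem : y ∈ rest.map Prod.snd := endOf_mem hrest
      have hxnotin : x ∉ (u :: rest.map Prod.snd) := (List.nodup_cons.mp hnd).1
      have hxy : x ≠ y := fun h => hxnotin (h ▸ List.mem_cons_of_mem _ hymem)
      have huy : u ≠ y := by
        intro h
        exact (List.nodup_cons.mp hnd').1 (h ▸ hymem)
      have hswap : swapped f x ((e, u) :: rest) = swapped f' u rest := rfl
      have hend : endOf x ((e, u) :: rest) = y := by simp [hy]
      rw [hswap, hend]
      refine ⟨hg, ?_, ?_, ?_⟩
      · rw [hg3 x (fun h => hxnotin (h ▸ List.mem_cons_self)) hxy]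
        exact hd1
      · rw [hg2, hd3 y (Ne.symm hxy) (Ne.symm huy)]
      · intro v hvx hvy
        by_cases hvu : v = u
        · subst hvu
          have h2' : imageDegree ℰ f' v = imageDegree ℰ f v + 1 := by simpa using hd2
          omega
        · rw [hg3 v hvu hvy, hd3 v hvx hvu]

lemma walk_simplify (ℰ : Finset (Finset V)) (f : Finset V → Finset V) :
    ∀ (n : ℕ) (steps : List (Finset V × V)) (x : V), steps.length ≤ n →
      IsWalk ℰ f x steps →
      ∃ t, IsWalk ℰ f x t ∧ endOf x t = endOf x steps ∧ t.length ≤ steps.length ∧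
        (x :: t.map Prod.snd).Nodup ∧ (t.map Prod.fst).Nodup := by
  intro n
  induction n with
  | zero =>
    intro steps x hlen _
    have : steps = [] := List.length_eq_zero_iff.mp (Nat.le_zero.mp hlen)
    subst this
    exact ⟨[], trivial, rfl, by simp, by simp, by simp⟩
  | succ n ih =>
    intro steps x hlen hw
    cases steps with
    | nil => exact ⟨[], trivial, rfl, by simp, by simp, by simp⟩
    | cons s rest =>
      obtain ⟨he, hx, hu, hu', hw'⟩ := hw
      obtain ⟨e, u⟩ := s
      have hlen' : rest.length ≤ n := by simpa using hlen
      obtain ⟨t', hwt, hendt, hlent, hndt, hedt⟩ := ih rest u hlen' hw'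
      by_cases hxu : x = u
      · subst hxu
        exact ⟨t', hwt, by simpa using hendt, by simp; omega, hndt, hedt⟩
      by_cases hxv : x ∈ t'.map Prod.snd
      · -- shortcut: x appears as a vertex of t'
        obtain ⟨p, hp, hpx⟩ := List.mem_map.mp hxv
        obtain ⟨a, b, hab⟩ := List.append_of_mem hp
        subst hab
        have hsplit := (isWalk_append u a (p :: b)).mp hwt
        have hwb' : IsWalk ℰ f x b := by
          obtain ⟨_, _, _, _, h5⟩ := hsplit.2
          rw [hpx] at h5
          exact h5
        have hendb : endOf x b = endOf x ((e, u) :: rest) := by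
          have h1 : endOf u (a ++ p :: b) = endOf p.2 b := by
            rw [endOf_append]
            simp
          rw [endOf_cons, ← hendt, h1, hpx]
        have hlab : (a ++ p :: b).length = a.length + b.length + 1 := by simp; omega
        have hlenb : b.length ≤ n := by
          rw [hlab] at hlent
          omega
        obtain ⟨t, h1, h2, h3, h4, h5⟩ := ih b x hlenb hwb'
        refine ⟨t, h1, by rw [h2, hendb], ?_, h4, h5⟩
        rw [hlab] at hlent
        simp
        omega
      by_cases hev : e ∈ t'.map Prod.fst
      · -- shortcut: edge e appears in t'
        obtain ⟨p, hp, hpe⟩ := List.mem_map.mp hev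
        obtain ⟨a, b, hab⟩ := List.append_of_mem hp
        subst hab
        have hsplit := (isWalk_append u a (p :: b)).mp hwt
        obtain ⟨hpE, hprev, hp2, hp2', hwb⟩ := hsplit.2
        have hwalk : IsWalk ℰ f x (p :: b) := ⟨hpE, by rw [hpe]; exact hx, hp2, hp2', hwb⟩
        have hendpb : endOf x (p :: b) = endOf x ((e, u) :: rest) := by
          rw [endOf_cons, endOf_cons, ← hendt, endOf_append, endOf_cons]
        have hlab : (a ++ p :: b).length = a.length + b.length + 1 := by simp; omega
        have hlenpb : (p :: b).length ≤ n := by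
          rw [hlab] at hlent
          simp
          omega
        obtain ⟨t, h1, h2, h3, h4, h5⟩ := ih (p :: b) x hlenpb hwalk
        refine ⟨t, h1, by rw [h2, hendpb], ?_, h4, h5⟩
        rw [hlab] at hlent
        simp at h3 ⊢
        omega
      · -- no duplication: keep the first step
        refine ⟨(e, u) :: t', ⟨he, hx, hu, hu', hwt⟩, by simpa using hendt,
          by simp; omega, ?_, ?_⟩
        · rw [List.nodup_cons]
          refine ⟨?_, hndt⟩
          simp only [List.map_cons, List.mem_cons]
          push_neg
          exact ⟨hxu, fun h => hxv (by simpa using h)⟩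
        · rw [List.map_cons, List.nodup_cons]
          exact ⟨hev, hedt⟩

end HypAux


open HypAux in
theorem exists_image_of_small_degree
    {V : Type*} [Fintype V] [DecidableEq V]
    (ℰ : Finset (Finset V)) (Δ δ k : ℕ)
    (hδ : 2 ≤ δ)
    (hdeg : ∀ v : V, hypDegree ℰ v ≤ Δ)
    (hedge : ∀ e ∈ ℰ, δ ≤ e.card)
    (hk₁ : 2 * Δ ≤ k * δ)
    (hk₂ : ∀ m : ℕ, 2 * Δ ≤ m * δ → k ≤ m) :
    ∃ f : Finset V → Finset V, IsImage ℰ f ∧ ∀ v : V, imageDegree ℰ f v ≤ k := by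
  classical
  -- Step 1: existence of a valid image
  have hex : ∃ f : Finset V → Finset V, IsImage ℰ f := by
    refine ⟨fun e => if h : 2 ≤ e.card then (Finset.exists_subset_card_eq h).choose else ∅, ?_⟩
    intro e he
    have h2 : 2 ≤ e.card := le_trans hδ (hedge e he)
    simp only [dif_pos h2]
    exact (Finset.exists_subset_card_eq h2).choose_spec
  -- Step 2: minimize the excess Φ
  obtain ⟨f, hf, hfval⟩ := Nat.sInf_mem
    (⟨_, hex.choose, hex.choose_spec, rfl⟩ :
      {n : ℕ | ∃ f, IsImage ℰ f ∧ ∑ v : V, (imageDegree ℰ f v - k) = n}.Nonempty)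
  have hmin : ∀ g, IsImage ℰ g →
      ∑ v : V, (imageDegree ℰ f v - k) ≤ ∑ v : V, (imageDegree ℰ g v - k) :=
    fun g hg => hfval ▸ Nat.sInf_le ⟨g, hg, rfl⟩
  by_cases hdone : ∀ v : V, imageDegree ℰ f v ≤ k
  · exact ⟨f, hf, hdone⟩
  push_neg at hdone
  obtain ⟨v₀, hv₀⟩ := hdone
  exfalso
  -- Reachability from v₀
  set Reach : V → Prop := fun y => ∃ steps, IsWalk ℰ f v₀ steps ∧ endOf v₀ steps = y
    with hReachDef
  have hReach_v₀ : Reach v₀ := ⟨[], trivial, rfl⟩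
  -- key lemma: all reachable vertices have image-degree ≥ k
  have hkey : ∀ y, Reach y → k ≤ imageDegree ℰ f y := by
    rintro y ⟨steps, hwalk, hend⟩
    obtain ⟨t, hwt, hent, _, hnd, hed⟩ :=
      walk_simplify ℰ f steps.length steps v₀ le_rfl hwalk
    by_cases ht : t = []
    · subst ht
      rw [← hend, ← hent, endOf_nil]
      omega
    · by_contra hlt
      push_neg at hlt
      obtain ⟨hg, hg1, hg2, hg3⟩ := swapped_spec ℰ t f v₀ hf hwt hnd hed ht
      have hyt : endOf v₀ t = y := by rw [hent, hend]
      rw [hyt] at hg2 hg3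
      have hv₀y : v₀ ≠ y := by
        intro h
        rw [h] at hv₀
        omega
      have hlt2 : ∑ v : V, (imageDegree ℰ (swapped f v₀ t) v - k)
          < ∑ v : V, (imageDegree ℰ f v - k) := by
        apply Finset.sum_lt_sum
        · intro v _
          by_cases h1 : v = v₀
          · subst h1; omega
          by_cases h2 : v = y
          · subst h2; omega
          · rw [hg3 v h1 h2]
        · exact ⟨v₀, Finset.mem_univ _, by omega⟩
      exact absurd (hmin _ hg) (by omega)
  -- the reachable set and the counting argument
  set R : Finset V := Finset.univ.filter Reach with hRdef
  have hv₀R : v₀ ∈ R := Finset.mem_filter.mpr ⟨Finset.mem_univ _, hReach_v₀⟩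
  have hRdeg : ∀ v ∈ R, k ≤ imageDegree ℰ f v :=
    fun v hv => hkey v (Finset.mem_filter.mp hv).2
  have hclosure : ∀ e ∈ ℰ, ∀ y, y ∈ R → y ∈ f e → ∀ u ∈ e, u ∉ f e → u ∈ R := by
    intro e he y hyR hyfe u hue hufe
    obtain ⟨steps, hw, hend⟩ := (Finset.mem_filter.mp hyR).2
    refine Finset.mem_filter.mpr ⟨Finset.mem_univ _, ⟨steps ++ [(e, u)], ?_, ?_⟩⟩
    · rw [isWalk_append]
      exact ⟨hw, he, hend ▸ hyfe, hue, hufe, trivial⟩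
    · rw [endOf_append, hend]
      simp [endOf]
  set n1 : Finset V → ℕ := fun e => (R.filter (fun v => v ∈ f e)).card with hn1def
  set n2 : Finset V → ℕ := fun e => (R.filter (fun v => v ∈ e)).card with hn2def
  set ER : Finset (Finset V) := ℰ.filter (fun e => n1 e ≠ 0) with hERdef
  -- S = sum of n1 over ER equals sum of image-degrees over R
  have hsum1 : ∑ e ∈ ℰ, n1 e = ∑ v ∈ R, imageDegree ℰ f v := by
    simp only [hn1def, Finset.card_filter, imageDegree]
    rw [Finset.sum_comm]
  have hsum1' : ∑ e ∈ ER, n1 e = ∑ e ∈ ℰ, n1 e := by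
    apply Finset.sum_subset (Finset.filter_subset _ _)
    intro e he hne
    by_contra h
    exact hne (Finset.mem_filter.mpr ⟨he, h⟩)
  have hsum2 : ∑ e ∈ ℰ, n2 e = ∑ v ∈ R, hypDegree ℰ v := by
    simp only [hn2def, Finset.card_filter, hypDegree]
    rw [Finset.sum_comm]
  -- bounds
  have hS_lb : k * R.card + 1 ≤ ∑ e ∈ ER, n1 e := by
    rw [hsum1', hsum1]
    have : ∑ _v ∈ R, k < ∑ v ∈ R, imageDegree ℰ f v :=
      Finset.sum_lt_sum hRdeg ⟨v₀, hv₀R, hv₀⟩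
    rw [Finset.sum_const, smul_eq_mul] at this
    rw [mul_comm] at this
    omega
  have hS_ub : ∑ e ∈ ER, n1 e ≤ 2 * ER.card := by
    have h2 : ∀ e ∈ ER, n1 e ≤ 2 := by
      intro e he
      obtain ⟨heE, -⟩ := Finset.mem_filter.mp he
      have hsub : R.filter (fun v => v ∈ f e) ⊆ f e :=
        fun v hv => (Finset.mem_filter.mp hv).2
      calc n1 e ≤ (f e).card := Finset.card_le_card hsub
        _ = 2 := (hf e heE).2
    calc ∑ e ∈ ER, n1 e ≤ ∑ _e ∈ ER, 2 := Finset.sum_le_sum h2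
      _ = 2 * ER.card := by rw [Finset.sum_const, smul_eq_mul, mul_comm]
  have hA_ub : ∑ e ∈ ER, n2 e ≤ R.card * Δ := by
    calc ∑ e ∈ ER, n2 e ≤ ∑ e ∈ ℰ, n2 e :=
          Finset.sum_le_sum_of_subset (Finset.filter_subset _ _)
      _ = ∑ v ∈ R, hypDegree ℰ v := hsum2
      _ ≤ ∑ _v ∈ R, Δ := Finset.sum_le_sum (fun v _ => hdeg v)
      _ = R.card * Δ := by rw [Finset.sum_const, smul_eq_mul]
  have hperedge : ∀ e ∈ ER, δ + n1 e ≤ n2 e + 2 := by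
    intro e he
    obtain ⟨heE, hne⟩ := Finset.mem_filter.mp he
    obtain ⟨y, hy⟩ := Finset.card_ne_zero.mp hne
    obtain ⟨hyR, hyfe⟩ := Finset.mem_filter.mp hy
    have hsub1 : e \ f e ⊆ R.filter (fun v => v ∈ e) := by
      intro a ha
      obtain ⟨hae, hafe⟩ := Finset.mem_sdiff.mp ha
      exact Finset.mem_filter.mpr ⟨hclosure e heE y hyR hyfe a hae hafe, hae⟩
    have hsub2 : R.filter (fun v => v ∈ f e) ⊆ R.filter (fun v => v ∈ e) := by
      intro a ha
      obtain ⟨haR, hafe⟩ := Finset.mem_filter.mp ha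
      exact Finset.mem_filter.mpr ⟨haR, (hf e heE).1 hafe⟩
    have hdisj : Disjoint (e \ f e) (R.filter (fun v => v ∈ f e)) := by
      rw [Finset.disjoint_left]
      intro a ha ha'
      exact (Finset.mem_sdiff.mp ha).2 (Finset.mem_filter.mp ha').2
    have hcard : (e \ f e).card + n1 e ≤ n2 e := by
      rw [hn1def, hn2def, ← Finset.card_union_of_disjoint hdisj]
      exact Finset.card_le_card (Finset.union_subset hsub1 hsub2)
    have hsd : (e \ f e).card = e.card - 2 := by
      rw [Finset.card_sdiff_of_subset (hf e heE).1, (hf e heE).2]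
    have h1 := hedge e heE
    omega
  have he2 : δ * ER.card + ∑ e ∈ ER, n1 e ≤ ∑ e ∈ ER, n2 e + 2 * ER.card := by
    have := Finset.sum_le_sum hperedge
    rw [Finset.sum_add_distrib, Finset.sum_add_distrib, Finset.sum_const,
      smul_eq_mul, Finset.sum_const, smul_eq_mul] at this
    rw [mul_comm ER.card δ, mul_comm ER.card 2] at this
    omega
  -- final arithmetic
  obtain ⟨c, hc⟩ : ∃ c, δ = c + 2 := ⟨δ - 2, by omega⟩
  set S := ∑ e ∈ ER, n1 e with hSdef
  set A := ∑ e ∈ ER, n2 e with hAdef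
  set m := ER.card with hmdef
  set r := R.card with hrdef
  have h5 : c * m + S ≤ r * Δ := by
    have h : c * m + S + 2 * m ≤ r * Δ + 2 * m := by
      calc c * m + S + 2 * m = δ * m + S := by rw [hc]; ring
        _ ≤ A + 2 * m := he2
        _ ≤ r * Δ + 2 * m := Nat.add_le_add_right hA_ub _
    exact Nat.le_of_add_le_add_right h
  have c1 : δ * S ≤ 2 * (r * Δ) := by
    calc δ * S = c * S + 2 * S := by rw [hc]; ring
      _ ≤ c * (2 * m) + 2 * S := Nat.add_le_add_right (Nat.mul_le_mul le_rfl hS_ub) _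
      _ = 2 * (c * m + S) := by ring
      _ ≤ 2 * (r * Δ) := Nat.mul_le_mul le_rfl h5
  have c2 : 2 * Δ * r + δ ≤ δ * S := by
    calc 2 * Δ * r + δ ≤ k * δ * r + δ :=
          Nat.add_le_add_right (Nat.mul_le_mul hk₁ le_rfl) _
      _ = δ * (k * r + 1) := by ring
      _ ≤ δ * S := Nat.mul_le_mul le_rfl hS_lb
  have hfin : 2 * Δ * r + δ ≤ 2 * Δ * r := by
    have h0 : 2 * (r * Δ) = 2 * Δ * r := by ring
    rw [h0] at c1
    exact le_trans c2 c1
  set q := 2 * Δ * r with hqdef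
  omega
end

section
/- Let H be a hypergraph on a finite vertex set V, let f be an image of H, and suppose there is an alternating chain a_0, b_0, a_1, b_1, …, a_n (for f) of length n ≥ 1 with a_0 ≠ a_n. Then there exists an image f' of H such that the image-degree of a_n under f' equals its image-degree under f plus 1, the image-degree of a_0 under f' equals its image-degree under f minus 1, and every other vertex has the same image-degree under f' as under f. -/
/-- An alternating chain `a 0, b 0, a 1, b 1, …, a n` of length `n` for the image `f`:
there are pairwise distinct hyperedges `es 0, …, es (n-1) ∈ ℰ` such that for each
`i < n` the vertices `a i, b i, a (i+1)` are pairwise distinct, `f (es i) = {a i, b i}`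
and `a (i+1) ∈ es i`. -/
def IsAltChain {V : Type*} [DecidableEq V] (ℰ : Finset (Finset V))
    (f : Finset V → Finset V) (n : ℕ) (a b : ℕ → V) (es : ℕ → Finset V) : Prop :=
  (∀ i < n, ∀ j < n, es i = es j → i = j) ∧
  ∀ i < n,
    es i ∈ ℰ ∧ a i ≠ b i ∧ a i ≠ a (i + 1) ∧ b i ≠ a (i + 1) ∧
    f (es i) = {a i, b i} ∧ a (i + 1) ∈ es i

theorem altChain_switch_image
    {V : Type*} [Fintype V] [DecidableEq V]
    (ℰ : Finset (Finset V)) (f : Finset V → Finset V)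
    (hf : IsImage ℰ f)
    (n : ℕ) (a b : ℕ → V) (es : ℕ → Finset V)
    (hchain : IsAltChain ℰ f n a b es)
    (hn : 1 ≤ n) (hne : a 0 ≠ a n) :
    ∃ f' : Finset V → Finset V, IsImage ℰ f' ∧
      imageDegree ℰ f' (a n) = imageDegree ℰ f (a n) + 1 ∧
      imageDegree ℰ f' (a 0) + 1 = imageDegree ℰ f (a 0) ∧
      ∀ v : V, v ≠ a 0 → v ≠ a n → imageDegree ℰ f' v = imageDegree ℰ f v := by
  classical
  obtain ⟨hinj, hprop⟩ := hchain
  set f' : Finset V → Finset V := fun e =>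
    if h : ∃ i, i < n ∧ es i = e then {b h.choose, a (h.choose + 1)} else f e with hf'def
  have hkey : ∀ i, i < n → f' (es i) = {b i, a (i + 1)} := by
    intro i hi
    have h : ∃ j, j < n ∧ es j = es i := ⟨i, hi, rfl⟩
    have hj := h.choose_spec
    have hji : h.choose = i := hinj _ hj.1 _ hi hj.2
    simp only [hf'def, dif_pos h, hji]
  have hsame : ∀ e, (¬ ∃ i, i < n ∧ es i = e) → f' e = f e := by
    intro e h; simp only [hf'def, dif_neg h]
  have hImage : IsImage ℰ f' := by
    intro e he
    by_cases h : ∃ i, i < n ∧ es i = e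
    · obtain ⟨i, hi, rfl⟩ := h
      rw [hkey i hi]
      obtain ⟨hesℰ, hab, haa, hba, hfe, hmem⟩ := hprop i hi
      refine ⟨?_, ?_⟩
      · intro x hx
        simp only [Finset.mem_insert, Finset.mem_singleton] at hx
        rcases hx with rfl | rfl
        · exact (hf _ hesℰ).1 (by rw [hfe]; simp)
        · exact hmem
      · rw [Finset.card_insert_of_notMem (by simpa using hba), Finset.card_singleton]
    · rw [hsame e h]; exact hf e he
  -- degree identity
  have hdegsum : ∀ (g : Finset V → Finset V) (v : V),
      (imageDegree ℰ g v : ℤ) = ∑ e ∈ ℰ, (if v ∈ g e then (1:ℤ) else 0) := by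
    intro g v
    rw [imageDegree, Finset.card_filter]
    push_cast
    rfl
  have S : Finset (Finset V) := (Finset.range n).image es
  have hdeg : ∀ v : V, (imageDegree ℰ f' v : ℤ) - imageDegree ℰ f v
      = (if v = a n then 1 else 0) - (if v = a 0 then 1 else 0) := by
    intro v
    rw [hdegsum, hdegsum, ← Finset.sum_sub_distrib]
    have hSsub : (Finset.range n).image es ⊆ ℰ := by
      intro e he
      simp only [Finset.mem_image, Finset.mem_range] at he
      obtain ⟨i, hi, rfl⟩ := he
      exact (hprop i hi).1
    rw [← Finset.sum_subset hSsub (by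
      intro e he heS
      have : ¬ ∃ i, i < n ∧ es i = e := by
        intro ⟨i, hi, hie⟩
        exact heS (Finset.mem_image.2 ⟨i, Finset.mem_range.2 hi, hie⟩)
      rw [hsame e this, sub_self])]
    rw [Finset.sum_image (by
      intro i hi j hj hij
      exact hinj i (Finset.mem_range.1 hi) j (Finset.mem_range.1 hj) hij)]
    have hterm : ∀ i ∈ Finset.range n,
        ((if v ∈ f' (es i) then (1:ℤ) else 0) - (if v ∈ f (es i) then (1:ℤ) else 0))
        = (if v = a (i+1) then (1:ℤ) else 0) - (if v = a i then (1:ℤ) else 0) := by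
      intro i hi
      have hi' := Finset.mem_range.1 hi
      obtain ⟨hesℰ, hab, haa, hba, hfe, hmem⟩ := hprop i hi'
      rw [hkey i hi', hfe]
      simp only [Finset.mem_insert, Finset.mem_singleton]
      by_cases h1 : v = a i <;> by_cases h2 : v = b i <;> by_cases h3 : v = a (i+1) <;>
        first
          | (exact absurd (h1 ▸ h2 ▸ rfl : a i = b i) hab)
          | (exact absurd (h2 ▸ h3 ▸ rfl : b i = a (i+1)) hba)
          | simp [h1, h2, h3, hab, haa, hba, Ne.symm hab, Ne.symm haa, Ne.symm hba]
    rw [Finset.sum_congr rfl hterm, Finset.sum_range_sub (fun i => if v = a i then (1:ℤ) else 0)]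
  refine ⟨f', hImage, ?_, ?_, ?_⟩
  · have := hdeg (a n)
    rw [if_pos rfl, if_neg (Ne.symm hne)] at this
    omega
  · have := hdeg (a 0)
    rw [if_neg hne, if_pos rfl] at this
    omega
  · intro v hv0 hvn
    have := hdeg v
    rw [if_neg hvn, if_neg hv0] at this
    omega
end

section
/- Let H be a hypergraph on a finite vertex set V, let f be an image of H, let k be a natural number, let S be the set of vertices of image-degree at least k + 1 under f, and let U be the set of all vertices reachable from S by alternating chains (in particular S ⊆ U). If e ∈ ℰ is a hyperedge with both vertices of f(e) belonging to U, then e ⊆ U. -/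
/-- `y` is reachable from the set `X` by alternating chains (chains of length 0
are allowed). -/
def AltReachable {V : Type*} [DecidableEq V] (ℰ : Finset (Finset V))
    (f : Finset V → Finset V) (X : Set V) (y : V) : Prop :=
  ∃ (n : ℕ) (a b : ℕ → V) (es : ℕ → Finset V),
    IsAltChain ℰ f n a b es ∧ a 0 ∈ X ∧ a n = y

lemma altReachable_extend {V : Type*} [DecidableEq V]
    (ℰ : Finset (Finset V)) (f : Finset V → Finset V) (X : Set V)
    (e : Finset V) (he : e ∈ ℰ) (x y w : V)
    (hfe : f e = {x, y}) (hxy : x ≠ y) (hw : w ∈ e) (hwx : w ≠ x) (hwy : w ≠ y)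
    (hx : AltReachable ℰ f X x) : AltReachable ℰ f X w := by
  obtain ⟨n, a, b, es, ⟨hinj, hch⟩, ha0, han⟩ := hx
  by_cases hcase : ∃ i < n, es i = e
  · obtain ⟨i, hi, hei⟩ := hcase
    refine ⟨i + 1, fun j => if j = i + 1 then w else a j, b, es, ⟨?_, ?_⟩, ?_, ?_⟩
    · intro p hp q hq hpq
      exact hinj p (hp.trans_le hi) q (hq.trans_le hi) hpq
    · intro j hj
      have hjn : j < n := hj.trans_le hi
      obtain ⟨h1, h2, h3, h4, h5, h6⟩ := hch j hjn
      rcases Nat.lt_succ_iff_lt_or_eq.1 hj with hji | hji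
      · have hne : j ≠ i + 1 := by omega
        have hne' : j + 1 ≠ i + 1 := by omega
        simp only [hne, hne', if_false]
        exact ⟨h1, h2, h3, h4, h5, h6⟩
      · subst hji
        have hne : j ≠ j + 1 := by omega
        simp only [hne, if_false, if_pos rfl]
        have hfej : f e = {a j, b j} := by rw [← hei]; exact h5
        have haj : a j ∈ ({x, y} : Finset V) := by
          rw [← hfe, hfej]; exact Finset.mem_insert_self _ _
        have hbj : b j ∈ ({x, y} : Finset V) := by
          rw [← hfe, hfej]; exact Finset.mem_insert_of_mem (Finset.mem_singleton_self _)
        have hwa : a j ≠ w := by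
          rcases Finset.mem_insert.1 haj with h | h
          · rw [h]; exact fun hh => hwx hh.symm
          · rw [Finset.mem_singleton.1 h]; exact fun hh => hwy hh.symm
        have hwb : b j ≠ w := by
          rcases Finset.mem_insert.1 hbj with h | h
          · rw [h]; exact fun hh => hwx hh.symm
          · rw [Finset.mem_singleton.1 h]; exact fun hh => hwy hh.symm
        exact ⟨h1, h2, hwa, hwb, h5, hei ▸ hw⟩
    · have h0 : (0 : ℕ) ≠ i + 1 := by omega
      simp only [h0, if_false]
      exact ha0
    · simp
  · push_neg at hcase
    refine ⟨n + 1, fun j => if j = n + 1 then w else a j,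
        fun j => if j = n then y else b j,
        fun j => if j = n then e else es j, ⟨?_, ?_⟩, ?_, ?_⟩
    · intro p hp q hq hpq
      rcases Nat.lt_succ_iff_lt_or_eq.1 hp with hp' | hp' <;>
        rcases Nat.lt_succ_iff_lt_or_eq.1 hq with hq' | hq'
      · simp only [Nat.ne_of_lt hp', Nat.ne_of_lt hq', if_false] at hpq
        exact hinj p hp' q hq' hpq
      · subst hq'
        simp only [Nat.ne_of_lt hp', if_false, if_pos rfl] at hpq
        exact absurd hpq (hcase p hp')
      · subst hp'
        simp only [Nat.ne_of_lt hq', if_false, if_pos rfl] at hpq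
        exact absurd hpq.symm (hcase q hq')
      · omega
    · intro j hj
      rcases Nat.lt_succ_iff_lt_or_eq.1 hj with hj' | hj'
      · obtain ⟨h1, h2, h3, h4, h5, h6⟩ := hch j hj'
        have e1 : j ≠ n := Nat.ne_of_lt hj'
        have e2 : j ≠ n + 1 := by omega
        have e3 : j + 1 ≠ n + 1 := by omega
        simp only [e1, e2, e3, if_false]
        exact ⟨h1, h2, h3, h4, h5, h6⟩
      · subst hj'
        have e2 : j ≠ j + 1 := by omega
        simp only [e2, if_false, if_pos rfl]
        rw [han]
        exact ⟨he, hxy, fun h => hwx h.symm, fun h => hwy h.symm, hfe, hw⟩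
    · have e0 : (0 : ℕ) ≠ n + 1 := by omega
      simp only [e0, if_false]
      exact ha0
    · simp

theorem edge_inside_U_of_image_inside_U
    {V : Type*} [Fintype V] [DecidableEq V]
    (ℰ : Finset (Finset V)) (f : Finset V → Finset V)
    (hf : IsImage ℰ f) (k : ℕ)
    (S : Set V) (hS : S = {v : V | k + 1 ≤ imageDegree ℰ f v})
    (U : Set V) (hU : U = {y : V | AltReachable ℰ f S y})
    (e : Finset V) (he : e ∈ ℰ)
    (hfe : ∀ u ∈ f e, u ∈ U) :
    ∀ w ∈ e, w ∈ U := by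
  intro w hw
  by_cases hwfe : w ∈ f e
  · exact hfe w hwfe
  obtain ⟨x, y, hxy, hfe2⟩ := Finset.card_eq_two.1 (hf e he).2
  have hx : x ∈ f e := by rw [hfe2]; exact Finset.mem_insert_self _ _
  have hxU : AltReachable ℰ f S x := by
    have := hfe x hx
    rw [hU] at this; exact this
  have hwx : w ≠ x := fun h => hwfe (h ▸ hx)
  have hwy : w ≠ y := fun h => hwfe (by
    rw [hfe2]; exact h ▸ Finset.mem_insert_of_mem (Finset.mem_singleton_self _))
  rw [hU]
  exact altReachable_extend ℰ f S e he x y w hfe2 hxy hw hwx hwy hxU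
end

section
/- Let H be a hypergraph on a finite vertex set V, let f be an image of H, let k be a natural number, let S be the set of vertices of image-degree at least k + 1 under f, and let U be the set of all vertices reachable from S by alternating chains (in particular S ⊆ U). If e ∈ ℰ is a hyperedge with f(e) = {u, v}, where u ∈ U and v ∉ U, then every vertex of e except v belongs to U, i.e. e \ {v} ⊆ U. -/
theorem edge_almost_inside_U
    {V : Type*} [Fintype V] [DecidableEq V]
    (ℰ : Finset (Finset V)) (f : Finset V → Finset V)
    (hf : IsImage ℰ f) (k : ℕ)
    (S : Set V) (hS : S = {x : V | k + 1 ≤ imageDegree ℰ f x})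
    (U : Set V) (hU : U = {y : V | AltReachable ℰ f S y})
    (e : Finset V) (he : e ∈ ℰ)
    (u v : V) (hfe : f e = {u, v}) (hu : u ∈ U) (hv : v ∉ U) :
    ∀ w ∈ e, w ≠ v → w ∈ U := by
  classical
  intro w hw hwv
  by_cases hwu : w = u
  · rwa [hwu]
  have huv : u ≠ v := fun h => hv (h ▸ hu)
  subst hU
  obtain ⟨n, a, b, es, hchain, ha0, han⟩ := hu
  have hQ : ∃ i, i = n ∨ (i < n ∧ es i = e) := ⟨n, Or.inl rfl⟩
  set m := Nat.find hQ with hm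
  have hmn : m ≤ n := by
    rcases Nat.find_spec hQ with h | h
    · exact h.le
    · exact h.1.le
  have hmin : ∀ j < m, es j ≠ e := by
    intro j hj hje
    have := Nat.find_min hQ hj
    push_neg at this
    exact absurd hje ((this.2) (lt_of_lt_of_le hj hmn))
  -- truncated chain
  have htr : IsAltChain ℰ f m a b es :=
    ⟨fun i hi j hj => hchain.1 i (lt_of_lt_of_le hi hmn) j (lt_of_lt_of_le hj hmn),
     fun i hi => hchain.2 i (lt_of_lt_of_le hi hmn)⟩
  have hamU : AltReachable ℰ f S (a m) := ⟨m, a, b, es, htr, ha0, rfl⟩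
  have ham : a m = u := by
    rcases Nat.find_spec hQ with h | h
    · rw [← hm] at h; rw [h, han]
    · rw [← hm] at h
      have hfes : f (es m) = {a m, b m} := (hchain.2 m h.1).2.2.2.2.1
      rw [h.2, hfe] at hfes
      have hamem : a m ∈ ({u, v} : Finset V) := by
        rw [hfes]; exact Finset.mem_insert_self _ _
      rcases Finset.mem_insert.1 hamem with h' | h'
      · exact h'
      · exact absurd hamU (by rw [Finset.mem_singleton.1 h']; exact fun hr => hv hr)
  refine ⟨m + 1, fun j => if j ≤ m then a j else w,
      fun j => if j < m then b j else v,
      fun j => if j < m then es j else e, ⟨?_, ?_⟩, ?_, ?_⟩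
  · intro i hi j hj heq
    rcases lt_or_eq_of_le (Nat.lt_succ_iff.1 hi) with hi' | hi' <;>
      rcases lt_or_eq_of_le (Nat.lt_succ_iff.1 hj) with hj' | hj'
    · simp only [if_pos hi', if_pos hj'] at heq
      exact hchain.1 i (lt_of_lt_of_le hi' hmn) j (lt_of_lt_of_le hj' hmn) heq
    · subst hj'; simp only [if_pos hi', if_neg (lt_irrefl m)] at heq
      exact absurd heq (hmin i hi')
    · subst hi'; simp only [if_pos hj', if_neg (lt_irrefl m)] at heq
      exact absurd heq.symm (hmin j hj')
    · rw [hi', hj']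
  · intro i hi
    rcases lt_or_eq_of_le (Nat.lt_succ_iff.1 hi) with hi' | hi'
    · have h1 : i ≤ m := hi'.le
      have h2 : i + 1 ≤ m := hi'
      simp only [if_pos hi', if_pos h1, if_pos h2]
      exact hchain.2 i (lt_of_lt_of_le hi' hmn)
    · subst hi'
      simp only [if_neg (lt_irrefl m), if_pos (le_refl m),
        if_neg (Nat.not_succ_le_self m)]
      rw [ham]
      exact ⟨he, huv, fun h => hwu h.symm, fun h => hwv h.symm, hfe, hw⟩
  · simpa using ha0
  · simp [Nat.not_succ_le_self m]
end

section
/- Let H be a hypergraph on a finite vertex set V in which every hyperedge contains at least 2 vertices, and let k be a natural number. Let f be an image of H that minimizes s_{k+1}, i.e. for every image f' of H, s_{k+1}(f) ≤ s_{k+1}(f'), where s_{k+1}(g) denotes the sum of image-degrees under g over all vertices of image-degree at least k + 1 under g. Let S be the set of vertices of image-degree at least k + 1 under f, and let U be the set of all vertices reachable from S by alternating chains. Then every vertex of U has image-degree at least k under f. -/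
/-- The sum of image-degrees under `f` over all vertices of image-degree at least
`k + 1` under `f`. -/
def bigDegSum {V : Type*} [Fintype V] [DecidableEq V] (ℰ : Finset (Finset V))
    (f : Finset V → Finset V) (k : ℕ) : ℕ :=
  ∑ v ∈ Finset.univ.filter (fun v => k + 1 ≤ imageDegree ℰ f v), imageDegree ℰ f v

theorem degree_in_U_ge_of_minimal_image
    {V : Type*} [Fintype V] [DecidableEq V]
    (ℰ : Finset (Finset V))
    (hedge : ∀ e ∈ ℰ, 2 ≤ e.card)
    (k : ℕ)
    (f : Finset V → Finset V) (hf : IsImage ℰ f)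
    (hmin : ∀ f' : Finset V → Finset V, IsImage ℰ f' →
      bigDegSum ℰ f k ≤ bigDegSum ℰ f' k)
    (S : Set V) (hS : S = {x : V | k + 1 ≤ imageDegree ℰ f x})
    (U : Set V) (hU : U = {y : V | AltReachable ℰ f S y}) :
    ∀ u ∈ U, k ≤ imageDegree ℰ f u := by
  classical
  subst hS hU
  intro u hu
  by_contra hdeg
  push_neg at hdeg
  obtain ⟨n, a, b, es, ⟨hinj, hchain⟩, hx, hy⟩ := hu
  have hxS : k + 1 ≤ imageDegree ℰ f (a 0) := hx
  -- the shifted image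
  set f' : Finset V → Finset V := fun e =>
    if h : ∃ i, i < n ∧ es i = e then {a (Nat.find h + 1), b (Nat.find h)} else f e
    with hf'def
  have key : ∀ i, i < n → f' (es i) = {a (i + 1), b i} := by
    intro i hi
    have h : ∃ j, j < n ∧ es j = es i := ⟨i, hi, rfl⟩
    have hfind : Nat.find h = i := hinj _ (Nat.find_spec h).1 _ hi (Nat.find_spec h).2
    simp only [hf'def, dif_pos h, hfind]
  have keyout : ∀ e, (∀ i, i < n → es i ≠ e) → f' e = f e := by
    intro e he
    have h : ¬ ∃ i, i < n ∧ es i = e := by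
      rintro ⟨i, hi, hie⟩; exact he i hi hie
    simp only [hf'def, dif_neg h]
  -- f' is an image
  have himg : IsImage ℰ f' := by
    intro e he
    by_cases hmem : ∃ i, i < n ∧ es i = e
    · obtain ⟨i, hi, rfl⟩ := hmem
      obtain ⟨heE, hab, haa, hba, hfeq, hmem'⟩ := hchain i hi
      rw [key i hi]
      constructor
      · intro v hv
        rcases Finset.mem_insert.mp hv with h | h
        · subst h; exact hmem'
        · rw [Finset.mem_singleton] at h; subst h
          apply (hf _ heE).1
          rw [hfeq]; exact Finset.mem_insert_of_mem (Finset.mem_singleton_self _)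
      · rw [Finset.card_insert_of_notMem, Finset.card_singleton]
        simp only [Finset.mem_singleton]
        exact fun h => hba h.symm
    · rw [keyout e (fun i hi hie => hmem ⟨i, hi, hie⟩)]
      exact hf e he
  -- the key degree difference formula
  set T : Finset (Finset V) := (Finset.range n).image es with hTdef
  have hTsub : T ⊆ ℰ := by
    intro e he
    obtain ⟨i, hi, rfl⟩ := Finset.mem_image.mp he
    exact (hchain i (Finset.mem_range.mp hi)).1
  have hdiff : ∀ v : V, (imageDegree ℰ f' v : ℤ) - imageDegree ℰ f v
      = (if v = a n then 1 else 0) - (if v = a 0 then 1 else 0) := by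
    intro v
    have h1 : ∀ g : Finset V → Finset V, (imageDegree ℰ g v : ℤ)
        = ∑ e ∈ ℰ, (if v ∈ g e then (1 : ℤ) else 0) := by
      intro g
      rw [imageDegree, Finset.card_filter]
      push_cast
      rfl
    rw [h1, h1, ← Finset.sum_sub_distrib]
    have hzero : ∀ e ∈ ℰ, e ∉ T →
        ((if v ∈ f' e then (1 : ℤ) else 0) - (if v ∈ f e then (1 : ℤ) else 0)) = 0 := by
      intro e _ heT
      have : ∀ i, i < n → es i ≠ e := by
        intro i hi hie
        exact heT (Finset.mem_image.mpr ⟨i, Finset.mem_range.mpr hi, hie⟩)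
      rw [keyout e this]; ring
    rw [← Finset.sum_subset hTsub hzero, hTdef,
      Finset.sum_image (fun i hi j hj h =>
        hinj i (Finset.mem_range.mp hi) j (Finset.mem_range.mp hj) h)]
    have hterm : ∀ i ∈ Finset.range n,
        ((if v ∈ f' (es i) then (1 : ℤ) else 0) - (if v ∈ f (es i) then (1 : ℤ) else 0))
        = (if v = a (i + 1) then (1 : ℤ) else 0) - (if v = a i then (1 : ℤ) else 0) := by
      intro i hi
      have hi' := Finset.mem_range.mp hi
      obtain ⟨heE, hab, haa, hba, hfeq, hmem'⟩ := hchain i hi'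
      rw [key i hi', hfeq]
      by_cases hb : v = b i
      · subst hb
        simp [Finset.mem_insert, (Ne.symm hab), fun h => hba h]
      · simp only [Finset.mem_insert, Finset.mem_singleton]
        by_cases h1 : v = a (i + 1) <;> by_cases h2 : v = a i <;> simp [h1, h2, hb, haa, hab, Ne.symm haa, Ne.symm hba]
    rw [Finset.sum_congr rfl hterm,
      Finset.sum_range_sub (fun i => if v = a i then (1 : ℤ) else 0)]
  -- conclude
  have hne : a 0 ≠ u := by
    intro h
    rw [h] at hxS
    omega
  have hdu : imageDegree ℰ f' u = imageDegree ℰ f u + 1 := by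
    have := hdiff u
    rw [if_pos hy.symm, if_neg (fun h => hne h.symm)] at this
    omega
  have hd0 : imageDegree ℰ f' (a 0) + 1 = imageDegree ℰ f (a 0) := by
    have := hdiff (a 0)
    have hn0 : a 0 ≠ a n := by rw [hy]; exact hne
    rw [if_neg hn0, if_pos rfl] at this
    omega
  have hother : ∀ v : V, v ≠ a 0 → v ≠ u → imageDegree ℰ f' v = imageDegree ℰ f v := by
    intro v hv0 hvu
    have := hdiff v
    rw [if_neg (by rw [hy]; exact hvu), if_neg hv0] at this
    omega
  have hlt : bigDegSum ℰ f' k < bigDegSum ℰ f k := by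
    rw [bigDegSum, bigDegSum, Finset.sum_filter, Finset.sum_filter]
    apply Finset.sum_lt_sum
    · intro v _
      by_cases hv0 : v = a 0
      · subst hv0
        split_ifs <;> omega
      · by_cases hvu : v = u
        · subst hvu
          rw [hdu]
          split_ifs <;> omega
        · rw [hother v hv0 hvu]
    · refine ⟨a 0, Finset.mem_univ _, ?_⟩
      split_ifs <;> omega
  exact absurd (hmin f' himg) (not_le.mpr hlt)
end
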